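/- Let S = (X,(φⱼ)ⱼ₌₁^L,(ρⱼ)ⱼ₌₁^L) be an IFZS with Banach contractions φⱼ and admissible grey level maps ρⱼ, X̂ a proper ε-net, r an ε-projection. Then the discretization commutes: for any u ∈ F̃*_{X̂}, e(Z_Ŝ(u|_{X̂})) = r(Z_S(u)), where Ŝ = (X̂,(r∘φⱼ)|_{X̂},(ρⱼ)) and Z denotes the fuzzy Hutchinson operator Z_S(u) = max_j ρⱼ(φⱼ(u)). -/

import Mathlib

open scoped Classical in
theorem stmt16 {X : Type*} [MetricSpace X] {J : Type*} [Fintype J] [Nonempty J]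
    (φ : J → X → X) (α : ℝ) (hα0 : 0 ≤ α) (hα1 : α < 1)
    (hφ : ∀ j, ∀ x y, dist (φ j x) (φ j y) ≤ α * dist x y)
    (ρ : J → ℝ → ℝ)
    (hρ_mono : ∀ j, MonotoneOn (ρ j) (Set.Icc (0 : ℝ) 1))
    (hρ_maps : ∀ j, ∀ t ∈ Set.Icc (0 : ℝ) 1, ρ j t ∈ Set.Icc (0 : ℝ) 1)
    (hρ_rc : ∀ j, ∀ a ∈ Set.Icc (0 : ℝ) 1, ContinuousWithinAt (ρ j) (Set.Ici a) a)
    (hρ0 : ∀ j, ρ j 0 = 0) (hρ1 : ∃ j, ρ j 1 = 1)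
    (ε : ℝ) (hε : 0 < ε) (Xhat : Set X)
    (hnet : ∀ x : X, ∃ y ∈ Xhat, dist x y ≤ ε)
    (hproper : ∀ D : Set X, Bornology.IsBounded D → (D ∩ Xhat).Finite)
    (r : X → X) (hr_mem : ∀ x, r x ∈ Xhat) (hr_id : ∀ x ∈ Xhat, r x = x)
    (hr_dist : ∀ x, dist x (r x) ≤ ε)
    (u : X → ℝ)
    (hu01 : ∀ x, u x ∈ Set.Icc (0 : ℝ) 1) (hun : ∃ x, u x = 1)
    (hufin : {x | 0 < u x}.Finite) (husub : {x | 0 < u x} ⊆ Xhat)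
    (ZS : (X → ℝ) → X → ℝ)
    (hZS : ∀ v : X → ℝ, ∀ x, ZS v x = ⨆ j, ρ j (sSup (v '' {y | φ j y = x})))
    (Zhat : X → ℝ)
    (hZhat : ∀ x, Zhat x =
      if x ∈ Xhat then ⨆ j, ρ j (sSup (u '' {y | y ∈ Xhat ∧ r (φ j y) = x})) else 0) :
    Zhat = fun x => sSup (ZS u '' {y | r y = x}) := by
  -- boundedness of images of u
  have hbdd : ∀ S : Set X, BddAbove (u '' S) := by
    intro S
    refine ⟨1, ?_⟩
    rintro v ⟨z, -, rfl⟩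
    exact (hu01 z).2
  -- the sup of u over a nonempty set is attained
  have hach : ∀ S : Set X, S.Nonempty → ∃ z ∈ S, u z = sSup (u '' S) := by
    intro S hS
    rcases (S ∩ {x | 0 < u x}).eq_empty_or_nonempty with hT | hT
    · obtain ⟨z₀, hz₀⟩ := hS
      have hz : ∀ z ∈ S, u z = 0 := by
        intro z hzS
        by_contra h
        have hpos : 0 < u z := lt_of_le_of_ne (hu01 z).1 (Ne.symm h)
        have : z ∈ S ∩ {x | 0 < u x} := ⟨hzS, hpos⟩
        simp [hT] at this
      refine ⟨z₀, hz₀, ?_⟩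
      have himg : u '' S = {0} := by
        apply Set.eq_singleton_iff_nonempty_unique_mem.mpr
        constructor
        · exact ⟨u z₀, Set.mem_image_of_mem u hz₀⟩
        · rintro v ⟨z, hzS, rfl⟩
          exact hz z hzS
      rw [himg, csSup_singleton, hz z₀ hz₀]
    · have hTfin : (S ∩ {x | 0 < u x}).Finite := hufin.subset Set.inter_subset_right
      obtain ⟨z₀, hz₀T, hmax⟩ := hTfin.exists_maximalFor u _ hT
      have hub : ∀ v ∈ u '' S, v ≤ u z₀ := by
        rintro v ⟨z, hzS, rfl⟩
        rcases lt_or_ge 0 (u z) with hpos | hle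
        · rcases le_total (u z) (u z₀) with h | h
          · exact h
          · exact hmax ⟨hzS, hpos⟩ h
        · exact hle.trans (hu01 z₀).1
      have hgr : IsGreatest (u '' S) (u z₀) :=
        ⟨Set.mem_image_of_mem u hz₀T.1, hub⟩
      exact ⟨z₀, hz₀T.1, hgr.csSup_eq.symm⟩
  have hnn : ∀ S : Set X, 0 ≤ sSup (u '' S) := by
    intro S
    rcases S.eq_empty_or_nonempty with rfl | hS
    · simp [Real.sSup_empty]
    · obtain ⟨z, hz, heq⟩ := hach S hS
      exact heq ▸ (hu01 z).1
  have hle1 : ∀ S : Set X, sSup (u '' S) ≤ 1 := by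
    intro S
    rcases S.eq_empty_or_nonempty with rfl | hS
    · simp [Real.sSup_empty]
    · refine csSup_le (hS.image u) ?_
      rintro v ⟨z, -, rfl⟩
      exact (hu01 z).2
  have hmono : ∀ S T : Set X, S ⊆ T → sSup (u '' S) ≤ sSup (u '' T) := by
    intro S T hST
    rcases S.eq_empty_or_nonempty with rfl | hS
    · simpa [Real.sSup_empty] using hnn T
    · obtain ⟨z, hz, heq⟩ := hach S hS
      rw [← heq]
      exact le_csSup (hbdd T) (Set.mem_image_of_mem u (hST hz))
  -- restricting to Xhat does not change sups of u
  have hrw : ∀ P : X → Prop,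
      sSup (u '' {z | z ∈ Xhat ∧ P z}) = sSup (u '' {z | P z}) := by
    intro P
    refine le_antisymm (hmono _ _ fun z hz => hz.2) ?_
    rcases Set.eq_empty_or_nonempty {z | P z} with hPe | hPn
    · rw [hPe]
      simpa [Real.sSup_empty] using hnn {z | z ∈ Xhat ∧ P z}
    · obtain ⟨z, hz, heq⟩ := hach _ hPn
      rw [← heq]
      rcases eq_or_lt_of_le (hu01 z).1 with h0 | hpos
      · rw [← h0]
        exact hnn _
      · exact le_csSup (hbdd _) (Set.mem_image_of_mem u ⟨husub hpos, hz⟩)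
  have hρ01 : ∀ j, ∀ S : Set X, ρ j (sSup (u '' S)) ∈ Set.Icc (0 : ℝ) 1 := by
    intro j S
    exact hρ_maps j _ ⟨hnn S, hle1 S⟩
  have hZS01 : ∀ y, ZS u y ∈ Set.Icc (0 : ℝ) 1 := by
    intro y
    rw [hZS]
    constructor
    · exact le_ciSup_of_le (Set.finite_range _).bddAbove (Classical.arbitrary J)
        (hρ01 _ _).1
    · exact ciSup_le fun j => (hρ01 j _).2
  funext x
  rw [hZhat]
  split_ifs with hx
  · -- x ∈ Xhat
    have hxY : x ∈ {y | r y = x} := hr_id x hx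
    have hYbdd : BddAbove (ZS u '' {y | r y = x}) := by
      refine ⟨1, ?_⟩
      rintro v ⟨y, -, rfl⟩
      exact (hZS01 y).2
    refine le_antisymm ?_ ?_
    · refine ciSup_le fun j => ?_
      rw [hrw (fun z => r (φ j z) = x)]
      rcases Set.eq_empty_or_nonempty {z | r (φ j z) = x} with hSe | hSn
      · rw [hSe]
        simp only [Set.image_empty, Real.sSup_empty, hρ0 j]
        exact le_trans (hZS01 x).1 (le_csSup hYbdd (Set.mem_image_of_mem _ hxY))
      · obtain ⟨z₀, hz₀, heq⟩ := hach _ hSn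
        have hy₀ : φ j z₀ ∈ {y | r y = x} := hz₀
        have hfib : sSup (u '' {z | φ j z = φ j z₀}) = sSup (u '' {z | r (φ j z) = x}) := by
          refine le_antisymm (hmono _ _ ?_) ?_
          · intro z hz
            show r (φ j z) = x
            rw [hz]
            exact hz₀
          · rw [← heq]
            exact le_csSup (hbdd _) (Set.mem_image_of_mem u rfl)
        rw [← hfib]
        refine le_trans ?_ (le_csSup hYbdd (Set.mem_image_of_mem _ hy₀))
        rw [hZS]
        exact le_ciSup (f := fun j' => ρ j' (sSup (u '' {z | φ j' z = φ j z₀})))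
          (Set.finite_range _).bddAbove j
    · refine csSup_le ⟨_, Set.mem_image_of_mem _ hxY⟩ ?_
      rintro v ⟨y, hy, rfl⟩
      rw [hZS]
      refine ciSup_mono (Set.finite_range _).bddAbove fun j => ?_
      rw [hrw (fun z => r (φ j z) = x)]
      refine hρ_mono j ⟨hnn _, hle1 _⟩ ⟨hnn _, hle1 _⟩ (hmono _ _ ?_)
      intro z hz
      show r (φ j z) = x
      rw [hz]
      exact hy
  · -- x ∉ Xhat
    have hY : {y | r y = x} = ∅ := by
      ext y
      simp only [Set.mem_setOf_eq, Set.mem_empty_iff_false, iff_false]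
      intro h
      exact hx (h ▸ hr_mem y)
    rw [hY, Set.image_empty, Real.sSup_empty]
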